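/- For p > 1, if Π is a Nambu-Poisson (p+1)-vector field on a manifold M and f is a smooth function on M, then fΠ is again a Nambu-Poisson (p+1)-vector field. -/

import Mathlib

open scoped Manifold BigOperators

/-- A bracket `B` of arity `p+1` on a commutative ring is an alternating multiderivation
(i.e. it corresponds to a `(p+1)`-vector field when the ring is the ring of smooth functions
on a manifold): it is additive and satisfies the Leibniz rule in each argument, and it
vanishes whenever two arguments coincide. -/
def IsAltMultiDeriv {A : Type*} [CommRing A] (p : ℕ) (B : (Fin (p + 1) → A) → A) : Prop :=
  (∀ (F : Fin (p + 1) → A) (i : Fin (p + 1)) (g h : A),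
      B (Function.update F i (g + h)) = B (Function.update F i g) + B (Function.update F i h)) ∧
  (∀ (F : Fin (p + 1) → A) (i : Fin (p + 1)) (g h : A),
      B (Function.update F i (g * h)) =
        g * B (Function.update F i h) + h * B (Function.update F i g)) ∧
  (∀ (F : Fin (p + 1) → A) (i j : Fin (p + 1)), i ≠ j → F i = F j → B F = 0)

/-- The fundamental identity of a Nambu-Poisson bracket of arity `p+1`:
`{f₁,…,f_p,{g₁,…,g_{p+1}}} = ∑ᵢ {g₁,…,{f₁,…,f_p,gᵢ},…,g_{p+1}}`.  This is the
bracket formulation of `L_{Π♯(df₁ ∧ ⋯ ∧ df_p)} Π = 0`. -/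
def FundamentalIdentity {A : Type*} [CommRing A] (p : ℕ) (B : (Fin (p + 1) → A) → A) : Prop :=
  ∀ (f : Fin p → A) (g : Fin (p + 1) → A),
    B (Fin.snoc f (B g)) = ∑ i : Fin (p + 1), B (Function.update g i (B (Fin.snoc f (g i))))

namespace NambuAux

variable {A : Type*} [CommRing A] {p : ℕ}
variable {B : (Fin (p + 1) → A) → A}

section Basic
variable (hB : IsAltMultiDeriv p B)
include hB

/-- additivity in the last slot of a snoc -/
lemma add_last (c : Fin p → A) (a b : A) :
    B (Fin.snoc c (a + b)) = B (Fin.snoc c a) + B (Fin.snoc c b) := by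
  have h := hB.1 (Fin.snoc c a) (Fin.last p) a b
  simpa [Fin.update_snoc_last] using h

/-- additivity in a middle slot of a snoc -/
lemma add_mid (c : Fin p → A) (i : Fin p) (a b z : A) :
    B (Fin.snoc (Function.update c i (a + b)) z)
      = B (Fin.snoc (Function.update c i a) z) + B (Fin.snoc (Function.update c i b) z) := by
  have h := hB.1 (Fin.snoc c z) i.castSucc a b
  simpa [← Fin.snoc_update] using h

/-- vanishing when a middle slot value (after update) equals the last slot -/
lemma alt_mid_last (c : Fin p → A) (i : Fin p) (a : A) :
    B (Fin.snoc (Function.update c i a) a) = 0 := by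
  refine hB.2.2 _ i.castSucc (Fin.last p) (Fin.ne_of_lt (Fin.castSucc_lt_last i)) ?_
  simp

/-- transposition between a middle slot and the last slot -/
lemma swap_last (c : Fin p → A) (i : Fin p) (a b : A) :
    B (Fin.snoc (Function.update c i a) b) = - B (Fin.snoc (Function.update c i b) a) := by
  have h0 : B (Fin.snoc (Function.update c i (a + b)) (a + b)) = 0 := alt_mid_last hB c i _
  rw [add_last hB, add_mid hB, add_mid hB, alt_mid_last hB, alt_mid_last hB] at h0
  linear_combination h0

/-- vanishing when two middle slots coincide -/
lemma alt_mid_mid (c : Fin p → A) (i j : Fin p) (hij : i ≠ j) (a z : A) :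
    B (Fin.snoc (Function.update (Function.update c j a) i a) z) = 0 := by
  refine hB.2.2 _ i.castSucc j.castSucc (by simpa [Fin.castSucc_inj] using hij) ?_
  simp [Fin.snoc_castSucc, Function.update_of_ne (Ne.symm hij)]

/-- additivity in a middle slot (two updates) -/
lemma add_mid₂ (c : Fin p → A) (i j : Fin p) (hij : i ≠ j) (a b y z : A) :
    B (Fin.snoc (Function.update (Function.update c j (a + b)) i y) z)
      = B (Fin.snoc (Function.update (Function.update c j a) i y) z)
        + B (Fin.snoc (Function.update (Function.update c j b) i y) z) := by
  rw [Function.update_comm hij.symm (a + b) y c]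
  rw [add_mid hB (Function.update c i y) j a b z]
  rw [Function.update_comm hij y a c, Function.update_comm hij y b c]

/-- transposition between two middle slots -/
lemma swap_mid (c : Fin p → A) (i j : Fin p) (hij : i ≠ j) (a b z : A) :
    B (Fin.snoc (Function.update (Function.update c j a) i b) z)
      = - B (Fin.snoc (Function.update (Function.update c j b) i a) z) := by
  have h0 : B (Fin.snoc (Function.update (Function.update c j (a + b)) i (a + b)) z) = 0 :=
    alt_mid_mid hB c i j hij _ z
  rw [add_mid₂ hB c i j hij a b (a + b) z] at h0
  rw [add_mid hB (Function.update c j a) i a b z, add_mid hB (Function.update c j b) i a b z] at h0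
  rw [alt_mid_mid hB c i j hij a z, alt_mid_mid hB c i j hij b z] at h0
  linear_combination h0

end Basic

section PP
variable (hB : IsAltMultiDeriv p B) (hFI : FundamentalIdentity p B)
include hB hFI

/-- The polarization identity: quadratic consequence of the fundamental identity. -/
lemma PP (c : Fin p → A) (k : Fin p) (a b : A) (t : Fin (p + 1) → A) :
    (∑ i : Fin (p + 1),
        B (Fin.snoc (Function.update c k b) (t i)) * B (Function.update t i a))
      + (∑ i : Fin (p + 1),
        B (Fin.snoc (Function.update c k a) (t i)) * B (Function.update t i b)) = 0 := by
  have leibKey : ∀ z : A, B (Fin.snoc (Function.update c k (a * b)) z)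
      = a * B (Fin.snoc (Function.update c k b) z)
        + b * B (Fin.snoc (Function.update c k a) z) := by
    intro z
    have h := hB.2.1 (Fin.snoc c z) k.castSucc a b
    simpa [← Fin.snoc_update] using h
  have h1 := hFI (Function.update c k (a * b)) t
  have ha := hFI (Function.update c k a) t
  have hbb := hFI (Function.update c k b) t
  simp only [leibKey, hB.1, hB.2.1] at h1
  rw [ha, hbb] at h1
  simp only [Finset.sum_add_distrib, ← Finset.mul_sum] at h1
  linear_combination -h1

end PP

section Main
variable (hB : IsAltMultiDeriv p B) (hFI : FundamentalIdentity p B)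
include hB hFI

lemma AG2 (c : Fin p → A) (f : A) (j : Fin p) (v : Fin p → A) :
    2 * (B (Fin.snoc c f) * B (Fin.snoc v (c j))
      + ∑ i : Fin p, B (Fin.snoc c (v i)) * B (Fin.snoc (Function.update v i (c j)) f)) = 0 := by
  have h := PP hB hFI c j (c j) (c j) (Fin.snoc v f)
  simp only [Function.update_eq_self] at h
  rw [Fin.sum_univ_castSucc] at h
  simp only [Fin.snoc_castSucc, Fin.snoc_last, Fin.update_snoc_last, ← Fin.snoc_update] at h
  linear_combination h

lemma BG2 (c : Fin p → A) (f u x : A) (j k : Fin p) (hjk : j ≠ k) :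
    2 * (B (Fin.snoc c f) * B (Fin.snoc (Function.update c k u) x))
      = 2 * (B (Fin.snoc c x) * B (Fin.snoc (Function.update c k u) f)
          + B (Fin.snoc c u) * B (Fin.snoc (Function.update c k f) x)) := by
  set v₀ : Fin p → A := Function.update (Function.update c k u) j x with hv₀
  have h := AG2 hB hFI c f j v₀
  -- first factor: B (snoc v₀ (c j)) = - B (snoc (update c k u) x)
  have e1 : B (Fin.snoc v₀ (c j)) = - B (Fin.snoc (Function.update c k u) x) := by
    rw [hv₀, swap_last hB (Function.update c k u) j x (c j)]
    rw [show Function.update (Function.update c k u) j (c j) = Function.update c k u by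
      rw [show c j = (Function.update c k u) j from (Function.update_of_ne hjk u c).symm,
        Function.update_eq_self]]
  -- the sum reduces to the two terms i = j and i = k
  have hsum : (∑ i : Fin p, B (Fin.snoc c (v₀ i)) * B (Fin.snoc (Function.update v₀ i (c j)) f))
      = B (Fin.snoc c x) * B (Fin.snoc (Function.update c k u) f)
        + B (Fin.snoc c u)
            * B (Fin.snoc (Function.update (Function.update c k (c j)) j x) f) := by
    rw [← Finset.sum_subset (Finset.subset_univ ({j, k} : Finset (Fin p)))]
    · rw [Finset.sum_pair hjk]
      have tj : Function.update v₀ j (c j) = Function.update c k u := by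
        rw [hv₀, Function.update_idem,
          show c j = (Function.update c k u) j from (Function.update_of_ne hjk u c).symm,
          Function.update_eq_self]
      have tk : Function.update v₀ k (c j) = Function.update (Function.update c k (c j)) j x := by
        rw [hv₀, Function.update_comm hjk, Function.update_idem]
      have vj : v₀ j = x := by rw [hv₀]; simp
      have vk : v₀ k = u := by
        rw [hv₀, Function.update_of_ne hjk.symm]; simp
      rw [tj, tk, vj, vk]
    · intro i _ hi
      simp only [Finset.mem_insert, Finset.mem_singleton] at hi
      push_neg at hi
      have hvi : v₀ i = c i := by
        rw [hv₀, Function.update_of_ne hi.1, Function.update_of_ne hi.2]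
      have h0 : B (Fin.snoc c (c i)) = 0 := by
        have := alt_mid_last hB c i (c i)
        rwa [Function.update_eq_self] at this
      rw [hvi, h0, zero_mul]
  -- the permutation identity
  have e2 : B (Fin.snoc (Function.update (Function.update c k (c j)) j x) f)
      = B (Fin.snoc (Function.update c k f) x) := by
    rw [swap_last hB (Function.update c k (c j)) j x f, Function.update_comm hjk.symm,
      swap_mid hB c k j hjk.symm f (c j) x, Function.update_eq_self]
    ring
  rw [hsum, e1, e2] at h
  linear_combination -h

/-- The square of `B (snoc c f)` kills the defect of the exchange identity. -/
lemma SQ2 (c : Fin p → A) (f u : A) (w : Fin p → A) (j k : Fin p) (hjk : j ≠ k) :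
    2 * B (Fin.snoc c f) ^ 2 *
      (B (Fin.snoc c f) * B (Fin.snoc w u)
        - B (Fin.snoc c u) * B (Fin.snoc w f)
        - ∑ i : Fin p, B (Fin.snoc c (w i)) * B (Fin.snoc (Function.update w i f) u)) = 0 := by
  -- (I) the master identity
  have ha := PP hB hFI c k (c k) u (Fin.snoc w f)
  simp only [Function.update_eq_self] at ha
  rw [Fin.sum_univ_castSucc, Fin.sum_univ_castSucc] at ha
  simp only [Fin.snoc_castSucc, Fin.snoc_last, Fin.update_snoc_last, ← Fin.snoc_update] at ha
  -- (III)
  have hd := PP hB hFI c k (c k) f (Fin.snoc w f)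
  simp only [Function.update_eq_self] at hd
  rw [Fin.sum_univ_castSucc, Fin.sum_univ_castSucc] at hd
  simp only [Fin.snoc_castSucc, Fin.snoc_last, Fin.update_snoc_last, ← Fin.snoc_update] at hd
  simp only [alt_mid_last hB, mul_zero, zero_mul, Finset.sum_const_zero, add_zero, zero_add] at hd
  -- (A)
  have hc := AG2 hB hFI c f k w
  -- (B) substituted into the first sum of (I)
  have hb : 2 * B (Fin.snoc c f)
        * ∑ i : Fin p, B (Fin.snoc (Function.update c k u) (w i))
            * B (Fin.snoc (Function.update w i (c k)) f)
      = 2 * B (Fin.snoc (Function.update c k u) f)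
          * (∑ i : Fin p, B (Fin.snoc c (w i)) * B (Fin.snoc (Function.update w i (c k)) f))
        + 2 * B (Fin.snoc c u)
          * (∑ i : Fin p, B (Fin.snoc (Function.update c k f) (w i))
              * B (Fin.snoc (Function.update w i (c k)) f)) := by
    rw [Finset.mul_sum, Finset.mul_sum, Finset.mul_sum, ← Finset.sum_add_distrib]
    refine Finset.sum_congr rfl fun i _ => ?_
    linear_combination B (Fin.snoc (Function.update w i (c k)) f) * BG2 hB hFI c f u (w i) j k hjk
  -- transposition in the second sum of (I)
  have he : (∑ i : Fin p, B (Fin.snoc c (w i)) * B (Fin.snoc (Function.update w i u) f))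
      = - ∑ i : Fin p, B (Fin.snoc c (w i)) * B (Fin.snoc (Function.update w i f) u) := by
    rw [← Finset.sum_neg_distrib]
    refine Finset.sum_congr rfl fun i _ => ?_
    rw [swap_last hB w i u f]; ring
  linear_combination (2 * B (Fin.snoc c f) ^ 2) * ha - B (Fin.snoc c f) * hb
    - (B (Fin.snoc c f) * B (Fin.snoc (Function.update c k u) f)) * hc
    - (2 * B (Fin.snoc c f) * B (Fin.snoc c u)) * hd
    - (2 * B (Fin.snoc c f) ^ 2) * he

end Main

section Exchange
variable (hB : IsAltMultiDeriv p B)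
include hB

/-- Exchanging `f` with the last entry of the tuple flips the sign of the defect. -/
lemma EXL (c : Fin p → A) (f u : A) (w : Fin p → A) :
    B (Fin.snoc c f) * B (Fin.snoc w u) - B (Fin.snoc c u) * B (Fin.snoc w f)
      - ∑ i : Fin p, B (Fin.snoc c (w i)) * B (Fin.snoc (Function.update w i f) u)
    = - (B (Fin.snoc c u) * B (Fin.snoc w f) - B (Fin.snoc c f) * B (Fin.snoc w u)
      - ∑ i : Fin p, B (Fin.snoc c (w i)) * B (Fin.snoc (Function.update w i u) f)) := by
  have he : (∑ i : Fin p, B (Fin.snoc c (w i)) * B (Fin.snoc (Function.update w i u) f))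
      = - ∑ i : Fin p, B (Fin.snoc c (w i)) * B (Fin.snoc (Function.update w i f) u) := by
    rw [← Finset.sum_neg_distrib]
    refine Finset.sum_congr rfl fun i _ => ?_
    rw [swap_last hB w i u f]; ring
  linear_combination -he

/-- Exchanging `f` with a middle entry of the tuple flips the sign of the defect. -/
lemma EXmid (c : Fin p → A) (f u : A) (w : Fin p → A) (j : Fin p) :
    B (Fin.snoc c (w j)) * B (Fin.snoc (Function.update w j f) u)
      - B (Fin.snoc c u) * B (Fin.snoc (Function.update w j f) (w j))
      - ∑ i : Fin p, B (Fin.snoc c (Function.update w j f i))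
          * B (Fin.snoc (Function.update (Function.update w j f) i (w j)) u)
    = - (B (Fin.snoc c f) * B (Fin.snoc w u) - B (Fin.snoc c u) * B (Fin.snoc w f)
      - ∑ i : Fin p, B (Fin.snoc c (w i)) * B (Fin.snoc (Function.update w i f) u)) := by
  have e0 : B (Fin.snoc (Function.update w j f) (w j)) = - B (Fin.snoc w f) := by
    rw [swap_last hB w j f (w j), Function.update_eq_self]
  have hsum : ∑ i : Fin p,
        (B (Fin.snoc c (Function.update w j f i))
            * B (Fin.snoc (Function.update (Function.update w j f) i (w j)) u)
          + B (Fin.snoc c (w i)) * B (Fin.snoc (Function.update w i f) u))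
      = B (Fin.snoc c f) * B (Fin.snoc w u)
        + B (Fin.snoc c (w j)) * B (Fin.snoc (Function.update w j f) u) := by
    rw [Finset.sum_eq_single j]
    · rw [Function.update_idem, Function.update_eq_self, Function.update_self]
    · intro i _ hij
      rw [Function.update_of_ne hij,
        swap_mid hB w i j hij f (w j) u, Function.update_eq_self]
      ring
    · intro hj; exact absurd (Finset.mem_univ j) hj
  rw [Finset.sum_add_distrib] at hsum
  linear_combination -hsum - B (Fin.snoc c u) * e0

end Exchange

end NambuAux

open NambuAux

section Concrete

variable {E : Type*} [NormedAddCommGroup E] [NormedSpace ℝ E]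
    {H : Type*} [TopologicalSpace H] {I : ModelWithCorners ℝ E H}
    {M : Type*} [TopologicalSpace M] [ChartedSpace H M] [IsManifold I (⊤ : ℕ∞) M]
    {p : ℕ}

/-- The key exchange identity (`(i_X Λ) ∧ Λ = 0` in bracket form), valid for `p > 1`. -/
theorem star_identity (hp : 1 < p)
    (B : (Fin (p + 1) → ContMDiffMap I 𝓘(ℝ, ℝ) M ℝ (⊤ : ℕ∞)) → ContMDiffMap I 𝓘(ℝ, ℝ) M ℝ (⊤ : ℕ∞))
    (hB : IsAltMultiDeriv p B) (hFI : FundamentalIdentity p B)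
    (c : Fin p → ContMDiffMap I 𝓘(ℝ, ℝ) M ℝ (⊤ : ℕ∞)) (f : ContMDiffMap I 𝓘(ℝ, ℝ) M ℝ (⊤ : ℕ∞))
    (g : Fin (p + 1) → ContMDiffMap I 𝓘(ℝ, ℝ) M ℝ (⊤ : ℕ∞)) :
    B (Fin.snoc c f) * B g
      = ∑ i : Fin (p + 1), B (Fin.snoc c (g i)) * B (Function.update g i f) := by
  obtain ⟨w, u, rfl⟩ : ∃ w u, g = Fin.snoc w u :=
    ⟨Fin.init g, g (Fin.last p), (Fin.snoc_init_self g).symm⟩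
  rw [Fin.sum_univ_castSucc]
  simp only [Fin.snoc_castSucc, Fin.snoc_last, Fin.update_snoc_last, ← Fin.snoc_update]
  have hp0 : 0 < p := by omega
  have hjk : (⟨0, hp0⟩ : Fin p) ≠ ⟨1, hp⟩ := by simp [Fin.ext_iff]
  rw [← sub_eq_zero]
  apply DFunLike.ext
  intro x
  let Φ : ContMDiffMap I 𝓘(ℝ, ℝ) M ℝ (⊤ : ℕ∞) →+* ℝ := ContMDiffMap.evalRingHom x
  suffices hh : Φ (B (Fin.snoc c f) * B (Fin.snoc w u) -
      (∑ i : Fin p, B (Fin.snoc c (w i)) * B (Fin.snoc (Function.update w i f) u) +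
        B (Fin.snoc c u) * B (Fin.snoc w f))) = Φ 0 from hh
  simp only [map_zero, map_sub, map_add, map_mul, map_sum]
  -- the three squared identities, evaluated at x
  have s1 := congrArg Φ (SQ2 hB hFI c f u w ⟨0, hp0⟩ ⟨1, hp⟩ hjk)
  have s2 := congrArg Φ (SQ2 hB hFI c u f w ⟨0, hp0⟩ ⟨1, hp⟩ hjk)
  simp only [map_zero, map_sub, map_add, map_mul, map_sum, map_pow, map_ofNat] at s1 s2
  have hex := congrArg Φ (EXL hB c f u w)
  simp only [map_sub, map_add, map_mul, map_sum, map_neg] at hex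
  by_cases hl : Φ (B (Fin.snoc c f)) = 0
  swap
  · have h2 : (2 : ℝ) * Φ (B (Fin.snoc c f)) ^ 2 ≠ 0 :=
      mul_ne_zero two_ne_zero (pow_ne_zero 2 hl)
    rcases mul_eq_zero.mp s1 with h | h
    · exact absurd h h2
    · linear_combination h
  by_cases hν : Φ (B (Fin.snoc c u)) = 0
  swap
  · have h2 : (2 : ℝ) * Φ (B (Fin.snoc c u)) ^ 2 ≠ 0 :=
      mul_ne_zero two_ne_zero (pow_ne_zero 2 hν)
    rcases mul_eq_zero.mp s2 with h | h
    · exact absurd h h2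
    · linear_combination hex - h
  by_cases hμ : ∀ i : Fin p, Φ (B (Fin.snoc c (w i))) = 0
  · rw [hl, hν]
    rw [Finset.sum_congr rfl fun i _ => by rw [hμ i, zero_mul]]
    simp
  · push_neg at hμ
    obtain ⟨i₀, hi₀⟩ := hμ
    have s3 := congrArg Φ (SQ2 hB hFI c (w i₀) u (Function.update w i₀ f) ⟨0, hp0⟩ ⟨1, hp⟩ hjk)
    simp only [map_zero, map_sub, map_add, map_mul, map_sum, map_pow, map_ofNat] at s3
    have hex2 := congrArg Φ (EXmid hB c f u w i₀)
    simp only [map_sub, map_add, map_mul, map_sum, map_neg] at hex2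
    have h2 : (2 : ℝ) * Φ (B (Fin.snoc c (w i₀))) ^ 2 ≠ 0 :=
      mul_ne_zero two_ne_zero (pow_ne_zero 2 hi₀)
    rcases mul_eq_zero.mp s3 with h | h
    · exact absurd h h2
    · linear_combination hex2 - h

end Concrete

/-- For `p > 1`, multiplying a Nambu-Poisson `(p+1)`-vector field on a manifold `M`
(realized as its bracket on smooth functions) by a smooth function `f` yields again a
Nambu-Poisson `(p+1)`-vector field. -/
theorem smul_nambu_poisson
    {E : Type*} [NormedAddCommGroup E] [NormedSpace ℝ E]
    {H : Type*} [TopologicalSpace H] (I : ModelWithCorners ℝ E H)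
    (M : Type*) [TopologicalSpace M] [ChartedSpace H M] [IsManifold I (⊤ : ℕ∞) M]
    {p : ℕ} (hp : 1 < p)
    (B : (Fin (p + 1) → ContMDiffMap I 𝓘(ℝ, ℝ) M ℝ (⊤ : ℕ∞)) → ContMDiffMap I 𝓘(ℝ, ℝ) M ℝ (⊤ : ℕ∞))
    (hB : IsAltMultiDeriv p B) (hFI : FundamentalIdentity p B)
    (f : ContMDiffMap I 𝓘(ℝ, ℝ) M ℝ (⊤ : ℕ∞)) :
    IsAltMultiDeriv p (fun F => f * B F) ∧ FundamentalIdentity p (fun F => f * B F) := by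
  constructor
  · refine ⟨fun F i g h => ?_, fun F i g h => ?_, fun F i j hij hFij => ?_⟩
    · simp only [hB.1 F i g h, mul_add]
    · simp only [hB.2.1 F i g h]; ring
    · simp only [hB.2.2 F i j hij hFij, mul_zero]
  · intro F g
    simp only []
    have e1 : B (Fin.snoc F (f * B g))
        = f * B (Fin.snoc F (B g)) + B g * B (Fin.snoc F f) := by
      have h := hB.2.1 (Fin.snoc F (B g)) (Fin.last p) f (B g)
      simpa [Fin.update_snoc_last] using h
    have e2 : ∀ i : Fin (p + 1), B (Function.update g i (f * B (Fin.snoc F (g i))))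
        = f * B (Function.update g i (B (Fin.snoc F (g i))))
          + B (Fin.snoc F (g i)) * B (Function.update g i f) :=
      fun i => hB.2.1 g i f (B (Fin.snoc F (g i)))
    rw [e1]
    simp only [e2]
    rw [hFI F g]
    have hst := star_identity hp B hB hFI F f g
    simp only [mul_add, Finset.sum_add_distrib, ← Finset.mul_sum]
    linear_combination f * hst
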